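/- Let Γ be a discrete group and X a compact Hausdorff space with a continuous Γ-action. For f₁, f₂ ∈ A₀(Γ,X) (the space of unconditionally summable functions Γ → C(X) with norm ‖f‖ = ‖∑_g |f_g|‖_∞), the convolution f₁ * f₂ defined by (f₁ * f₂)(g) = ∑_{h∈Γ} f₁(h)·(f₂(h⁻¹g))^h satisfies ‖f₁ * f₂‖_{A₀} ≤ ‖f₁‖_{A₀}·‖f₂‖_{A₀}. In particular A₀(Γ,X) is a Banach algebra. -/

import Mathlib

/- STATEMENT 0: submultiplicativity of the convolution on A₀(Γ,X).
Elements of A₀(Γ,X) are (unconditionally summable) maps Γ → C(X);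
the norm is ‖f‖ = ‖∑_g |f_g|‖_∞ = ⨆ x, ∑_g |f(g)(x)|, and the convolution is
(f₁ * f₂)(g)(x) = ∑_h f₁(h)(x)·f₂(h⁻¹g)(h⁻¹.x). -/
set_option maxHeartbeats 800000 in
theorem A0_conv_norm_le
    {Γ X : Type*} [Group Γ] [TopologicalSpace X] [CompactSpace X] [T2Space X]
    [MulAction Γ X] [ContinuousConstSMul Γ X]
    (f₁ f₂ : Γ → C(X, ℂ))
    (h₁s : ∀ x : X, Summable fun g => ‖f₁ g x‖)
    (h₂s : ∀ x : X, Summable fun g => ‖f₂ g x‖)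
    (h₁b : BddAbove (Set.range fun x : X => ∑' g, ‖f₁ g x‖))
    (h₂b : BddAbove (Set.range fun x : X => ∑' g, ‖f₂ g x‖)) :
    (⨆ x : X, ∑' g : Γ,
        ‖∑' h : Γ, f₁ h x * f₂ (h⁻¹ * g) (h⁻¹ • x)‖) ≤
      (⨆ x : X, ∑' g : Γ, ‖f₁ g x‖) *
        (⨆ x : X, ∑' g : Γ, ‖f₂ g x‖) := by
  set M₁ := ⨆ x : X, ∑' g : Γ, ‖f₁ g x‖ with hM₁
  set M₂ := ⨆ x : X, ∑' g : Γ, ‖f₂ g x‖ with hM₂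
  have hM₁0 : 0 ≤ M₁ := Real.iSup_nonneg fun x => tsum_nonneg fun g => norm_nonneg _
  have hM₂0 : 0 ≤ M₂ := Real.iSup_nonneg fun x => tsum_nonneg fun g => norm_nonneg _
  have hS₁le : ∀ x, (∑' g, ‖f₁ g x‖) ≤ M₁ := fun x => le_ciSup h₁b x
  have hS₂le : ∀ x, (∑' g, ‖f₂ g x‖) ≤ M₂ := fun x => le_ciSup h₂b x
  refine Real.iSup_le (fun x => ?_) (mul_nonneg hM₁0 hM₂0)
  have hrow : ∀ h : Γ, Summable fun g => ‖f₂ (h⁻¹ * g) (h⁻¹ • x)‖ := by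
    intro h
    have := ((Equiv.mulLeft h⁻¹).summable_iff
      (f := fun k : Γ => ‖f₂ k (h⁻¹ • x)‖)).2 (h₂s _)
    simpa [Function.comp_def] using this
  have hrowsum : ∀ h : Γ,
      (∑' g, ‖f₂ (h⁻¹ * g) (h⁻¹ • x)‖) = ∑' g, ‖f₂ g (h⁻¹ • x)‖ := by
    intro h
    have := (Equiv.mulLeft h⁻¹).tsum_eq (fun k : Γ => ‖f₂ k (h⁻¹ • x)‖)
    simpa using this
  have hFrow : ∀ h : Γ, Summable fun g : Γ =>
      ‖f₁ h x‖ * ‖f₂ (h⁻¹ * g) (h⁻¹ • x)‖ :=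
    fun h => (hrow h).mul_left _
  have hFrowsum : ∀ h : Γ,
      (∑' g : Γ, ‖f₁ h x‖ * ‖f₂ (h⁻¹ * g) (h⁻¹ • x)‖)
        = ‖f₁ h x‖ * ∑' g, ‖f₂ g (h⁻¹ • x)‖ := by
    intro h
    rw [tsum_mul_left, hrowsum h]
  have hrowbd : ∀ h : Γ,
      (∑' g : Γ, ‖f₁ h x‖ * ‖f₂ (h⁻¹ * g) (h⁻¹ • x)‖)
        ≤ ‖f₁ h x‖ * M₂ := by
    intro h
    rw [hFrowsum h]
    exact mul_le_mul_of_nonneg_left (hS₂le _) (norm_nonneg _)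
  have hcol : Summable fun h : Γ =>
      ∑' g : Γ, ‖f₁ h x‖ * ‖f₂ (h⁻¹ * g) (h⁻¹ • x)‖ :=
    Summable.of_nonneg_of_le
      (fun h => tsum_nonneg fun g => mul_nonneg (norm_nonneg _) (norm_nonneg _))
      hrowbd ((h₁s x).mul_right M₂)
  have hFsummable : Summable fun p : Γ × Γ =>
      ‖f₁ p.1 x‖ * ‖f₂ (p.1⁻¹ * p.2) (p.1⁻¹ • x)‖ := by
    rw [summable_prod_of_nonneg
      (fun p => mul_nonneg (norm_nonneg _) (norm_nonneg _))]
    exact ⟨hFrow, hcol⟩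
  have hcol' : ∀ g : Γ, Summable fun h : Γ =>
      ‖f₁ h x‖ * ‖f₂ (h⁻¹ * g) (h⁻¹ • x)‖ :=
    fun g => hFsummable.prod_symm.prod_factor g
  have hUsum : Summable fun g : Γ =>
      ∑' h : Γ, ‖f₁ h x‖ * ‖f₂ (h⁻¹ * g) (h⁻¹ • x)‖ :=
    hFsummable.prod_symm.prod
  have hterm : ∀ g : Γ,
      ‖∑' h : Γ, f₁ h x * f₂ (h⁻¹ * g) (h⁻¹ • x)‖
        ≤ ∑' h : Γ, ‖f₁ h x‖ * ‖f₂ (h⁻¹ * g) (h⁻¹ • x)‖ := by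
    intro g
    have hn : Summable fun h : Γ => ‖f₁ h x * f₂ (h⁻¹ * g) (h⁻¹ • x)‖ := by
      have := hcol' g
      simpa [norm_mul] using this
    calc ‖∑' h : Γ, f₁ h x * f₂ (h⁻¹ * g) (h⁻¹ • x)‖
        = ‖∑' h : Γ, f₁ h x * f₂ (h⁻¹ * g) (h⁻¹ • x)‖ := rfl
      _ ≤ ∑' h : Γ, ‖f₁ h x * f₂ (h⁻¹ * g) (h⁻¹ • x)‖ := norm_tsum_le_tsum_norm hn
      _ = ∑' h : Γ, ‖f₁ h x‖ * ‖f₂ (h⁻¹ * g) (h⁻¹ • x)‖ := by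
          simp [norm_mul]
  have hTsum : Summable fun g : Γ =>
      ‖∑' h : Γ, f₁ h x * f₂ (h⁻¹ * g) (h⁻¹ • x)‖ :=
    Summable.of_nonneg_of_le (fun g => norm_nonneg _) hterm hUsum
  calc (∑' g : Γ, ‖∑' h : Γ, f₁ h x * f₂ (h⁻¹ * g) (h⁻¹ • x)‖)
      ≤ ∑' g : Γ, ∑' h : Γ, ‖f₁ h x‖ * ‖f₂ (h⁻¹ * g) (h⁻¹ • x)‖ :=
        Summable.tsum_le_tsum hterm hTsum hUsum
    _ = ∑' h : Γ, ∑' g : Γ, ‖f₁ h x‖ * ‖f₂ (h⁻¹ * g) (h⁻¹ • x)‖ :=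
        Summable.tsum_comm (f := fun h g : Γ => ‖f₁ h x‖ * ‖f₂ (h⁻¹ * g) (h⁻¹ • x)‖)
          (by exact hFsummable)
    _ ≤ ∑' h : Γ, ‖f₁ h x‖ * M₂ :=
        Summable.tsum_le_tsum hrowbd hcol ((h₁s x).mul_right M₂)
    _ = (∑' h : Γ, ‖f₁ h x‖) * M₂ := tsum_mul_right
    _ ≤ M₁ * M₂ := mul_le_mul_of_nonneg_right (hS₁le x) hM₂0
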